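/- Let G be a finite group with a normal Sylow 2-subgroup S such that every real element of S lies in the center of S. Then the prime graph on the real class sizes of G is connected. -/

import Mathlib

/-- An element `x` of a group is *real* if it is conjugate to its inverse. -/
def IsRealEl (G : Type*) [Group G] (x : G) : Prop := ∃ g : G, g⁻¹ * x * g = x⁻¹

/-- The size of the conjugacy class of `x` in `G`. -/
noncomputable def clSize (G : Type*) [Group G] (x : G) : ℕ := Nat.card {y : G // IsConj x y}

/-- Vertices of the prime graph on real class sizes. -/
def realVerts (G : Type*) [Group G] : Set ℕ :=
  {p | p.Prime ∧ ∃ x : G, IsRealEl G x ∧ p ∣ clSize G x}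

/-- Adjacency in the prime graph on real class sizes. -/
def realAdj (G : Type*) [Group G] (p q : ℕ) : Prop :=
  p.Prime ∧ q.Prime ∧ p ≠ q ∧ ∃ x : G, IsRealEl G x ∧ p * q ∣ clSize G x

/-- The prime graph on real class sizes is disconnected. -/
def realDisconnected (G : Type*) [Group G] : Prop :=
  ∃ π₁ π₂ : Set ℕ, π₁.Nonempty ∧ π₂.Nonempty ∧ Disjoint π₁ π₂ ∧
    π₁ ∪ π₂ = realVerts G ∧ ∀ p ∈ π₁, ∀ q ∈ π₂, ¬ realAdj G p q

noncomputable section RealAux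

open Finset

section Basics

variable {G : Type*} [Group G]

lemma isRealEl_of_sq {x : G} (h : x * x = 1) : IsRealEl G x :=
  ⟨1, by rw [inv_one, mul_one, one_mul, inv_eq_of_mul_eq_one_right h]⟩

lemma eq_one_of_isReal_of_odd {Q : Type*} [Group Q] [Finite Q]
    (hodd : ¬ 2 ∣ Nat.card Q) {x : Q} (h : IsRealEl Q x) : x = 1 := by
  obtain ⟨g, hg⟩ := h
  have h1 : g⁻¹ * x⁻¹ * g = x := by
    have h0 : (g⁻¹ * x * g)⁻¹ = (x⁻¹)⁻¹ := by rw [hg]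
    simpa [mul_inv_rev, mul_assoc] using h0
  have hA : (g * g)⁻¹ * x * (g * g) = x := by
    rw [mul_inv_rev]
    calc g⁻¹ * g⁻¹ * x * (g * g) = g⁻¹ * (g⁻¹ * x * g) * g := by group
      _ = g⁻¹ * x⁻¹ * g := by rw [hg]
      _ = x := h1
  have hxg2 : Commute x (g * g) := by
    have h2 : (g * g) * ((g * g)⁻¹ * x * (g * g)) = (g * g) * x := congrArg _ hA
    rwa [show (g * g) * ((g * g)⁻¹ * x * (g * g)) = x * (g * g) by group] at h2
  set n := orderOf g with hn
  have hnodd : ¬ 2 ∣ n := fun h2 => hodd (h2.trans (orderOf_dvd_natCard g))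
  have hk : 2 * ((n + 1) / 2) = n + 1 := by omega
  have hgg : (g * g) ^ ((n + 1) / 2) = g := by
    rw [← pow_two, ← pow_mul, hk, pow_succ, pow_orderOf_eq_one, one_mul]
  have hcg : Commute x g := by
    have := hxg2.pow_right ((n + 1) / 2)
    rwa [hgg] at this
  have hxx : x⁻¹ = x := by
    rw [← hg, mul_assoc, hcg.eq, inv_mul_cancel_left]
  have hx2 : x ^ 2 = 1 := by
    rw [pow_two]
    nth_rewrite 1 [← hxx]
    exact inv_mul_cancel x
  have hd2 : orderOf x ∣ 2 := orderOf_dvd_of_pow_eq_one hx2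
  rcases (Nat.prime_two.eq_one_or_self_of_dvd _ hd2) with h' | h'
  · exact orderOf_eq_one_iff.mp h'
  · exact absurd (h' ▸ orderOf_dvd_natCard x) hodd

end Basics

section Struct

variable {G : Type*} [Group G] [Finite G]

lemma mem_sylow_of_real (S : Sylow 2 G) (hnorm : (S : Subgroup G).Normal)
    {x : G} (hx : IsRealEl G x) : x ∈ (S : Subgroup G) := by
  haveI : Fact (Nat.Prime 2) := ⟨Nat.prime_two⟩
  obtain ⟨g, hg⟩ := hx
  have hQ : ¬ 2 ∣ Nat.card (G ⧸ (S : Subgroup G)) := by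
    rw [← Subgroup.index_eq_card]
    exact S.not_dvd_index
  have himg : IsRealEl (G ⧸ (S : Subgroup G)) (x : G ⧸ (S : Subgroup G)) := by
    refine ⟨(g : G ⧸ (S : Subgroup G)), ?_⟩
    have := congrArg (QuotientGroup.mk (s := (S : Subgroup G))) hg
    simpa using this
  have := eq_one_of_isReal_of_odd hQ himg
  rwa [QuotientGroup.eq_one_iff] at this

lemma real_struct (S : Sylow 2 G) (hnorm : (S : Subgroup G).Normal)
    (hreal : ∀ x : (S : Subgroup G), IsRealEl (S : Subgroup G) x →
      x ∈ Subgroup.center (S : Subgroup G))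
    {x : G} (hx : IsRealEl G x) :
    x * x = 1 ∧ ∀ s ∈ (S : Subgroup G), x * s = s * x := by
  haveI : Fact (Nat.Prime 2) := ⟨Nat.prime_two⟩
  have hxS : x ∈ (S : Subgroup G) := mem_sylow_of_real S hnorm hx
  obtain ⟨g, hg⟩ := hx
  set n := orderOf g with hn
  have hn0 : n ≠ 0 := by
    rw [hn]
    exact (orderOf_pos g).ne'
  set m := n / 2 ^ (n.factorization 2) with hm
  have hmdvd : m ∣ n := Nat.ordCompl_dvd n 2
  have hmodd : ¬ 2 ∣ m := Nat.not_dvd_ordCompl Nat.prime_two hn0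
  set t := g ^ m with ht
  have h1 : g⁻¹ * x⁻¹ * g = x := by
    have h0 : (g⁻¹ * x * g)⁻¹ = (x⁻¹)⁻¹ := by rw [hg]
    simpa [mul_inv_rev, mul_assoc] using h0
  have hA : (g ^ 2)⁻¹ * x * (g ^ 2) = x := by
    rw [pow_two, mul_inv_rev]
    calc g⁻¹ * g⁻¹ * x * (g * g) = g⁻¹ * (g⁻¹ * x * g) * g := by group
      _ = g⁻¹ * x⁻¹ * g := by rw [hg]
      _ = x := h1
  have hxg2 : Commute x (g ^ 2) := by
    have h2 : (g ^ 2) * ((g ^ 2)⁻¹ * x * (g ^ 2)) = (g ^ 2) * x := congrArg _ hA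
    rwa [show (g ^ 2) * ((g ^ 2)⁻¹ * x * (g ^ 2)) = x * (g ^ 2) by group] at h2
  have hconj : ∀ {c : G}, Commute x c → c⁻¹ * x * c = x := by
    intro c h
    rw [mul_assoc, h.eq, inv_mul_cancel_left]
  have hminv : t⁻¹ * x * t = x⁻¹ := by
    obtain ⟨j, hj⟩ : ∃ j, m = 2 * j + 1 := ⟨m / 2, by omega⟩
    have hc : Commute x ((g ^ 2) ^ j) := hxg2.pow_right j
    rw [ht, hj, pow_succ, pow_mul, mul_inv_rev]
    calc g⁻¹ * ((g ^ 2) ^ j)⁻¹ * x * ((g ^ 2) ^ j * g)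
        = g⁻¹ * (((g ^ 2) ^ j)⁻¹ * x * (g ^ 2) ^ j) * g := by group
      _ = g⁻¹ * x * g := by rw [hconj hc]
      _ = x⁻¹ := hg
  have htS : t ∈ (S : Subgroup G) := by
    have hpg : IsPGroup 2 (Subgroup.zpowers t) := by
      apply IsPGroup.of_card (n := n.factorization 2)
      rw [Nat.card_zpowers, ht, orderOf_pow, ← hn, Nat.gcd_eq_right hmdvd, hm]
      exact Nat.div_div_self (Nat.ordProj_dvd n 2) hn0
    obtain ⟨Q, hQ⟩ := hpg.exists_le_sylow
    haveI := Sylow.unique_of_normal S hnorm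
    have hQS : Q = S := Subsingleton.elim Q S
    exact hQS ▸ hQ (Subgroup.mem_zpowers t)
  have hxZ : ∀ s ∈ (S : Subgroup G), x * s = s * x := by
    have hrS : IsRealEl (S : Subgroup G) ⟨x, hxS⟩ := by
      refine ⟨⟨t, htS⟩, Subtype.ext ?_⟩
      push_cast
      exact hminv
    have hc := hreal _ hrS
    rw [Subgroup.mem_center_iff] at hc
    intro s hs
    have h3 := hc ⟨s, hs⟩
    have h4 := congrArg (Subtype.val) h3
    push_cast at h4
    exact h4.symm
  refine ⟨?_, hxZ⟩
  have hcomm : x * t = t * x := hxZ t htS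
  have h1' : x⁻¹ = x := by
    rw [← hminv, mul_assoc, hcomm, inv_mul_cancel_left]
  nth_rewrite 1 [← h1']
  exact inv_mul_cancel x

end Struct

section Counting

variable {G : Type*} [Group G]

lemma clSize_conj {x y : G} (h : IsConj x y) : clSize G x = clSize G y := by
  apply Nat.card_congr
  exact Equiv.subtypeEquivRight (fun z => ⟨fun hz => h.symm.trans hz, fun hz => h.trans hz⟩)

lemma clSize_ne_zero [Finite G] (x : G) : clSize G x ≠ 0 := by
  have : Nonempty {y : G // IsConj x y} := ⟨⟨x, IsConj.refl x⟩⟩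
  exact Nat.card_pos.ne'

open scoped Classical in
lemma clSize_eq_card_filter [Fintype G] (x : G) :
    clSize G x = (univ.filter (fun y => IsConj x y)).card := by
  rw [clSize, Nat.card_eq_fintype_card, Fintype.card_subtype]

open scoped Classical in
lemma card_dvd_of_right_mul_closed [Fintype G]
    (H : Subgroup G) (B : Finset G) (hB : ∀ g ∈ B, ∀ h : G, h ∈ H → g * h ∈ B) :
    Nat.card H ∣ B.card := by
  have key : ∀ q ∈ B.image (QuotientGroup.mk (s := H)),
      (B.filter (fun g => QuotientGroup.mk (s := H) g = q)).card = Nat.card H := by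
    intro q hq
    obtain ⟨g₀, hg₀B, rfl⟩ := Finset.mem_image.mp hq
    have himg : B.filter (fun g => QuotientGroup.mk (s := H) g = QuotientGroup.mk g₀)
        = (Finset.univ.image (fun h : H => g₀ * (h : G))) := by
      ext g
      simp only [Finset.mem_filter, Finset.mem_image, Finset.mem_univ, true_and]
      constructor
      · rintro ⟨hgB, hq'⟩
        have hmem : g₀⁻¹ * g ∈ H := by
          have := QuotientGroup.eq.mp hq'.symm
          exact this
        exact ⟨⟨g₀⁻¹ * g, hmem⟩, by group⟩
      · rintro ⟨h, rfl⟩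
        refine ⟨hB g₀ hg₀B h h.2, ?_⟩
        exact QuotientGroup.mk_mul_of_mem g₀ h.2
    rw [himg, Finset.card_image_of_injective _
      (fun h h' e => Subtype.coe_injective (mul_left_cancel e)),
      Finset.card_univ, Nat.card_eq_fintype_card]
  rw [Finset.card_eq_sum_card_fiberwise
    (fun g hg => Finset.mem_image_of_mem (QuotientGroup.mk (s := H)) hg)]
  rw [Finset.sum_congr rfl key, Finset.sum_const, smul_eq_mul]
  exact dvd_mul_left _ _

open scoped Classical in
lemma card_conj_fiber [Fintype G] {y u : G} (h : IsConj y u) :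
    (Finset.univ.filter (fun g : G => g⁻¹ * y * g = u)).card
      = Nat.card (Subgroup.centralizer ({y} : Set G)) := by
  obtain ⟨c, hc⟩ := isConj_iff.mp h
  have h0 : (c⁻¹)⁻¹ * y * c⁻¹ = u := by simpa using hc
  set g₀ := c⁻¹ with hg₀
  have himg : Finset.univ.filter (fun g : G => g⁻¹ * y * g = u)
      = Finset.univ.image (fun d : Subgroup.centralizer ({y} : Set G) => (d : G) * g₀) := by
    ext g
    simp only [mem_filter, mem_univ, true_and, mem_image]
    constructor
    · intro hg
      refine ⟨⟨g * g₀⁻¹, ?_⟩, by group⟩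
      rw [Subgroup.mem_centralizer_singleton_iff]
      have e1 : y = g * u * g⁻¹ := by rw [← hg]; group
      have e2 : y = g₀ * u * g₀⁻¹ := by rw [← h0]; group
      calc (g * g₀⁻¹) * y = (g * g₀⁻¹) * (g₀ * u * g₀⁻¹) := by rw [← e2]
        _ = g * u * g₀⁻¹ := by group
        _ = (g * u * g⁻¹) * (g * g₀⁻¹) := by group
        _ = y * (g * g₀⁻¹) := by rw [← e1]
    · rintro ⟨d, rfl⟩
      have hd : (d : G) * y = y * (d : G) := Subgroup.mem_centralizer_singleton_iff.mp d.2
      calc ((d : G) * g₀)⁻¹ * y * ((d : G) * g₀)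
          = g₀⁻¹ * ((d : G)⁻¹ * (y * (d : G))) * g₀ := by group
        _ = g₀⁻¹ * ((d : G)⁻¹ * ((d : G) * y)) * g₀ := by rw [← hd]
        _ = g₀⁻¹ * y * g₀ := by group
        _ = u := h0
  rw [himg, Finset.card_image_of_injective _
    (fun d d' e => Subtype.coe_injective (mul_right_cancel e)),
    Finset.card_univ, Nat.card_eq_fintype_card]

open scoped Classical in
lemma clSize_mul_card_centralizer [Fintype G] (x : G) :
    clSize G x * Nat.card (Subgroup.centralizer ({x} : Set G)) = Nat.card G := by
  have h1 : (Finset.univ : Finset G).card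
      = ∑ u ∈ univ.filter (fun y => IsConj x y),
          (univ.filter (fun g : G => g⁻¹ * x * g = u)).card := by
    apply Finset.card_eq_sum_card_fiberwise (f := fun g => g⁻¹ * x * g)
    intro g _
    simp only [coe_filter, mem_filter, mem_univ, true_and, Set.mem_setOf_eq]
    refine isConj_iff.mpr ⟨g⁻¹, ?_⟩
    group
  symm
  calc Nat.card G = (Finset.univ : Finset G).card := by
        rw [Nat.card_eq_fintype_card, card_univ]
    _ = ∑ u ∈ univ.filter (fun y => IsConj x y),
          (univ.filter (fun g : G => g⁻¹ * x * g = u)).card := h1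
    _ = ∑ _u ∈ univ.filter (fun y => IsConj x y),
          Nat.card (Subgroup.centralizer ({x} : Set G)) :=
        Finset.sum_congr rfl (fun u hu => card_conj_fiber (mem_filter.mp hu).2)
    _ = (univ.filter (fun y => IsConj x y)).card
          * Nat.card (Subgroup.centralizer ({x} : Set G)) := by
        rw [Finset.sum_const, smul_eq_mul]
    _ = clSize G x * Nat.card (Subgroup.centralizer ({x} : Set G)) := by
        rw [clSize_eq_card_filter]

lemma clSize_eq_index [Finite G] (x : G) :
    clSize G x = (Subgroup.centralizer ({x} : Set G)).index := by
  cases nonempty_fintype G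
  have h1 := clSize_mul_card_centralizer (G := G) x
  have h2 := Subgroup.card_mul_index (Subgroup.centralizer ({x} : Set G))
  have hc : 0 < Nat.card (Subgroup.centralizer ({x} : Set G)) := Nat.card_pos
  apply Nat.eq_of_mul_eq_mul_left hc
  rw [mul_comm (Nat.card _) (clSize G x), h1, h2]

end Counting

section Coprime

variable {G : Type*} [Group G]

lemma index_inf_eq [Finite G] {H K : Subgroup G}
    (h : Nat.Coprime H.index K.index) :
    (H ⊓ K).index = H.index * K.index := by
  have h1 : H.index ∣ (H ⊓ K).index := Subgroup.index_dvd_of_le inf_le_left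
  have h2 : K.index ∣ (H ⊓ K).index := Subgroup.index_dvd_of_le inf_le_right
  have h4 : H.index * K.index ∣ (H ⊓ K).index := h.mul_dvd_of_dvd_of_dvd h1 h2
  have h5 : (H ⊓ K).index ≠ 0 := Subgroup.index_ne_zero_of_finite
  exact le_antisymm Subgroup.index_inf_le (Nat.le_of_dvd (Nat.pos_of_ne_zero h5) h4)

lemma cent_inf_le_mul (u w : G) :
    Subgroup.centralizer {u} ⊓ Subgroup.centralizer {w}
      ≤ Subgroup.centralizer ({u * w} : Set G) := by
  intro c hc
  have hu : Commute c u := Subgroup.mem_centralizer_singleton_iff.mp (Subgroup.mem_inf.mp hc).1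
  have hw : Commute c w := Subgroup.mem_centralizer_singleton_iff.mp (Subgroup.mem_inf.mp hc).2
  exact Subgroup.mem_centralizer_singleton_iff.mpr (hu.mul_right hw)

lemma cent_inf_le_left (u w : G) :
    Subgroup.centralizer ({u * w} : Set G) ⊓ Subgroup.centralizer {w}
      ≤ Subgroup.centralizer ({u} : Set G) := by
  intro c hc
  have h1 : Commute c (u * w) :=
    Subgroup.mem_centralizer_singleton_iff.mp (Subgroup.mem_inf.mp hc).1
  have h2 : Commute c w := Subgroup.mem_centralizer_singleton_iff.mp (Subgroup.mem_inf.mp hc).2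
  apply Subgroup.mem_centralizer_singleton_iff.mpr
  simpa [mul_inv_cancel_right] using (h1.mul_right h2.inv_right).eq

lemma cent_inf_le_right (u w : G) :
    Subgroup.centralizer ({u * w} : Set G) ⊓ Subgroup.centralizer {u}
      ≤ Subgroup.centralizer ({w} : Set G) := by
  intro c hc
  have h1 : Commute c (u * w) :=
    Subgroup.mem_centralizer_singleton_iff.mp (Subgroup.mem_inf.mp hc).1
  have h2 : Commute c u := Subgroup.mem_centralizer_singleton_iff.mp (Subgroup.mem_inf.mp hc).2
  apply Subgroup.mem_centralizer_singleton_iff.mpr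
  simpa [inv_mul_cancel_left] using (h2.inv_right.mul_right h1).eq

lemma cs_eq_left [Finite G] {u v z : G} (hz : u * v = z)
    (hcopuv : Nat.Coprime (clSize G u) (clSize G v))
    (hcopzv : Nat.Coprime (clSize G z) (clSize G v)) :
    clSize G z = clSize G u := by
  have hIu := clSize_eq_index (G := G) u
  have hIv := clSize_eq_index (G := G) v
  have hIz := clSize_eq_index (G := G) z
  have hcop1 : Nat.Coprime (Subgroup.centralizer ({u} : Set G)).index
      (Subgroup.centralizer ({v} : Set G)).index := by rwa [hIu, hIv] at hcopuv
  have hcop2 : Nat.Coprime (Subgroup.centralizer ({z} : Set G)).index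
      (Subgroup.centralizer ({v} : Set G)).index := by rwa [hIz, hIv] at hcopzv
  have h1 : clSize G z ∣ clSize G u * clSize G v := by
    rw [hIu, hIv, hIz, ← index_inf_eq hcop1]
    exact Subgroup.index_dvd_of_le (hz ▸ cent_inf_le_mul u v)
  have h2 : clSize G u ∣ clSize G z * clSize G v := by
    rw [hIu, hIv, hIz, ← index_inf_eq hcop2]
    exact Subgroup.index_dvd_of_le (hz ▸ cent_inf_le_left u v)
  exact Nat.dvd_antisymm (hcopzv.dvd_of_dvd_mul_right h1) (hcopuv.dvd_of_dvd_mul_right h2)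

lemma cs_eq_right [Finite G] {u v z : G} (hz : u * v = z)
    (hcopuv : Nat.Coprime (clSize G u) (clSize G v))
    (hcopzu : Nat.Coprime (clSize G z) (clSize G u)) :
    clSize G z = clSize G v := by
  have hIu := clSize_eq_index (G := G) u
  have hIv := clSize_eq_index (G := G) v
  have hIz := clSize_eq_index (G := G) z
  have hcop1 : Nat.Coprime (Subgroup.centralizer ({u} : Set G)).index
      (Subgroup.centralizer ({v} : Set G)).index := by rwa [hIu, hIv] at hcopuv
  have hcop2 : Nat.Coprime (Subgroup.centralizer ({z} : Set G)).index
      (Subgroup.centralizer ({u} : Set G)).index := by rwa [hIz, hIu] at hcopzu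
  have h1 : clSize G z ∣ clSize G u * clSize G v := by
    rw [hIu, hIv, hIz, ← index_inf_eq hcop1]
    exact Subgroup.index_dvd_of_le (hz ▸ cent_inf_le_mul u v)
  have h2 : clSize G v ∣ clSize G z * clSize G u := by
    rw [hIu, hIv, hIz, ← index_inf_eq hcop2]
    exact Subgroup.index_dvd_of_le (hz ▸ cent_inf_le_right u v)
  refine Nat.dvd_antisymm ?_ (hcopuv.symm.dvd_of_dvd_mul_right h2)
  exact hcopzu.dvd_of_dvd_mul_right (by rwa [mul_comm] at h1)

end Coprime

section KeyDvd

variable {G : Type*} [Group G]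

open scoped Classical in
lemma key_dvd [Fintype G] (y z : G) (Kx : Finset G)
    (hKx : ∀ w ∈ Kx, ∀ g : G, g⁻¹ * w * g ∈ Kx)
    (hcop : Nat.Coprime (clSize G z) (clSize G y)) :
    clSize G y ∣
      (((univ.filter (fun u => IsConj y u)).filter (fun u => z * u ∈ Kx)).card) := by
  set Cy := Subgroup.centralizer ({y} : Set G) with hCy
  set Cz := Subgroup.centralizer ({z} : Set G) with hCz
  set M := ((univ.filter (fun u => IsConj y u)).filter (fun u => z * u ∈ Kx)) with hM
  set B := univ.filter (fun g : G => z * (g⁻¹ * y * g) ∈ Kx) with hB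
  have hBcard : B.card = M.card * Nat.card Cy := by
    have hmem : ∀ g ∈ B, (fun g : G => g⁻¹ * y * g) g ∈ M := by
      intro g hg
      simp only [hB, mem_filter, mem_univ, true_and] at hg
      simp only [hM, mem_filter, mem_univ, true_and]
      exact ⟨isConj_iff.mpr ⟨g⁻¹, by group⟩, hg⟩
    rw [Finset.card_eq_sum_card_fiberwise hmem]
    have hfib : ∀ u ∈ M, (B.filter (fun g => g⁻¹ * y * g = u)).card = Nat.card Cy := by
      intro u hu
      simp only [hM, mem_filter, mem_univ, true_and] at hu
      have h1 : B.filter (fun g => g⁻¹ * y * g = u)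
          = univ.filter (fun g : G => g⁻¹ * y * g = u) := by
        ext g
        simp only [hB, mem_filter, mem_univ, true_and]
        constructor
        · rintro ⟨_, h⟩; exact h
        · intro h; exact ⟨by rw [h]; exact hu.2, h⟩
      rw [h1]
      exact card_conj_fiber hu.1
    rw [Finset.sum_congr rfl hfib, Finset.sum_const, smul_eq_mul]
  have hclosed : ∀ g ∈ B, ∀ h : G, h ∈ Cz → g * h ∈ B := by
    intro g hg h hh
    simp only [hB, mem_filter, mem_univ, true_and] at hg ⊢
    have hcz : h * z = z * h := Subgroup.mem_centralizer_singleton_iff.mp hh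
    have he : z * ((g * h)⁻¹ * y * (g * h)) = h⁻¹ * (z * (g⁻¹ * y * g)) * h := by
      rw [mul_inv_rev]
      have hcz' : z * h⁻¹ = h⁻¹ * z := ((show Commute h z from hcz).inv_left.eq).symm
      calc z * (h⁻¹ * g⁻¹ * y * (g * h)) = (z * h⁻¹) * (g⁻¹ * y * g) * h := by group
        _ = (h⁻¹ * z) * (g⁻¹ * y * g) * h := by rw [hcz']
        _ = h⁻¹ * (z * (g⁻¹ * y * g)) * h := by group
    rw [he]
    exact hKx _ hg h
  have hdvd : Nat.card Cz ∣ B.card := card_dvd_of_right_mul_closed Cz B hclosed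
  rw [hBcard] at hdvd
  have e1 : clSize G z * Nat.card Cz = Nat.card G := clSize_mul_card_centralizer z
  have e2 : clSize G y * Nat.card Cy = Nat.card G := clSize_mul_card_centralizer y
  have h3 : clSize G y * Nat.card Cz ∣ (M.card * clSize G z) * Nat.card Cz := by
    have h0 := mul_dvd_mul_left (clSize G y) hdvd
    have heq : clSize G y * (M.card * Nat.card Cy) = (M.card * clSize G z) * Nat.card Cz := by
      calc clSize G y * (M.card * Nat.card Cy)
          = M.card * (clSize G y * Nat.card Cy) := by ring
        _ = M.card * (clSize G z * Nat.card Cz) := by rw [e1, e2]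
        _ = (M.card * clSize G z) * Nat.card Cz := by ring
    rwa [heq] at h0
  have hCz0 : 0 < Nat.card Cz := Nat.card_pos
  have h4 : clSize G y ∣ M.card * clSize G z :=
    (Nat.mul_dvd_mul_iff_right hCz0).mp h3
  exact (Nat.Coprime.dvd_of_dvd_mul_right hcop.symm h4)

lemma endgame [Fintype G] {K L : Finset G}
    (hodd : ¬ 2 ∣ K.card) (hL : 2 ≤ L.card)
    (hLinv : ∀ u ∈ L, u * u = 1)
    (hLcomm : ∀ u ∈ L, ∀ v ∈ L, u * v = v * u)
    (hclosed : ∀ g ∈ K, ∀ u ∈ L, ∀ v ∈ L, g * (u * v) ∈ K) : False := by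
  classical
  haveI : Fact (Nat.Prime 2) := ⟨Nat.prime_two⟩
  obtain ⟨u, hu, v, hv, huv⟩ := Finset.one_lt_card.mp hL
  set w := u * v with hw
  have hw2 : w * w = 1 := by
    rw [hw]
    calc u * v * (u * v) = u * (v * u) * v := by group
      _ = u * (u * v) * v := by rw [hLcomm v hv u hu]
      _ = (u * u) * (v * v) := by group
      _ = 1 := by rw [hLinv u hu, hLinv v hv, one_mul]
  have hwne : w ≠ 1 := by
    intro h
    apply huv
    have h1 : v = u⁻¹ := eq_inv_of_mul_eq_one_left (by rw [hLcomm v hv u hu, ← hw, h])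
    have h2 : u⁻¹ = u := inv_eq_of_mul_eq_one_right (hLinv u hu)
    rw [h1, h2]
  have horder : orderOf w = 2 := orderOf_eq_prime (by rw [pow_two, hw2]) hwne
  have hzmem : ∀ h ∈ Subgroup.zpowers w, h = 1 ∨ h = w := by
    intro h hh
    obtain ⟨k, rfl⟩ := Subgroup.mem_zpowers_iff.mp hh
    rcases Int.even_or_odd k with ⟨j, rfl⟩ | ⟨j, rfl⟩
    · left
      rw [← two_mul, zpow_mul]
      rw [show (w : G) ^ (2:ℤ) = w * w by
        rw [show (2:ℤ) = 1 + 1 by norm_num, zpow_add, zpow_one], hw2, one_zpow]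
    · right
      rw [zpow_add, zpow_one, two_mul, zpow_add]
      rw [show (w : G) ^ (j:ℤ) * w ^ (j:ℤ) = w ^ (2*j : ℤ) by rw [two_mul, zpow_add]]
      rw [zpow_mul, show (w : G) ^ (2:ℤ) = w * w by
        rw [show (2:ℤ) = 1 + 1 by norm_num, zpow_add, zpow_one], hw2, one_zpow, one_mul]
  have hdvd : Nat.card (Subgroup.zpowers w) ∣ K.card := by
    apply card_dvd_of_right_mul_closed
    intro g hg h hh
    rcases hzmem h hh with rfl | rfl
    · simpa using hg
    · exact hclosed g hg u hu v hv
  rw [Nat.card_zpowers, horder] at hdvd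
  exact hodd hdvd

end KeyDvd

end RealAux

set_option maxHeartbeats 2000000 in
theorem stmt_18 {G : Type*} [Group G] [Finite G] (S : Sylow 2 G)
    (hnorm : (S : Subgroup G).Normal)
    (hreal : ∀ x : (S : Subgroup G), IsRealEl (S : Subgroup G) x →
      x ∈ Subgroup.center (S : Subgroup G)) :
    ¬ realDisconnected G := by
  haveI : Fact (Nat.Prime 2) := ⟨Nat.prime_two⟩
  cases nonempty_fintype G
  classical
  rintro ⟨π₁, π₂, ⟨p, hp1⟩, ⟨q, hq2⟩, hdisj, huni, hnoadj⟩
  -- extract vertex data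
  have hpv : p ∈ realVerts G := by rw [← huni]; exact Set.mem_union_left _ hp1
  have hqv : q ∈ realVerts G := by rw [← huni]; exact Set.mem_union_right _ hq2
  obtain ⟨hp, x, hxreal, hpa⟩ := hpv
  obtain ⟨hq, y, hyreal, hqb⟩ := hqv
  obtain ⟨hx2, hxc⟩ := real_struct S hnorm hreal hxreal
  obtain ⟨hy2, hyc⟩ := real_struct S hnorm hreal hyreal
  -- structure of involutions
  have struct : ∀ u : G, u * u = 1 → ∀ s ∈ (S : Subgroup G), u * s = s * u :=
    fun u hu => (real_struct S hnorm hreal (isRealEl_of_sq hu)).2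
  have memS : ∀ u : G, u * u = 1 → u ∈ (S : Subgroup G) :=
    fun u hu => mem_sylow_of_real S hnorm (isRealEl_of_sq hu)
  have comm2 : ∀ u v : G, u * u = 1 → v * v = 1 → u * v = v * u :=
    fun u v hu hv => struct u hu v (memS v hv)
  -- odd class sizes
  have hoddcs : ∀ u : G, u * u = 1 → ¬ 2 ∣ clSize G u := by
    intro u hu h2
    have hle : (S : Subgroup G) ≤ Subgroup.centralizer ({u} : Set G) := by
      intro s hs
      exact Subgroup.mem_centralizer_singleton_iff.mpr (struct u hu s hs).symm
    have hdvd1 : (Subgroup.centralizer ({u} : Set G)).index ∣ (S : Subgroup G).index :=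
      Subgroup.index_dvd_of_le hle
    rw [clSize_eq_index] at h2
    exact S.not_dvd_index (h2.trans hdvd1)
  -- no edges in either direction
  have hnoE : ∀ a b : ℕ, (a ∈ π₁ ∧ b ∈ π₂) ∨ (a ∈ π₂ ∧ b ∈ π₁) → ¬ realAdj G a b := by
    rintro a b (⟨ha, hb⟩ | ⟨ha, hb⟩) hadj
    · exact hnoadj a ha b hb hadj
    · refine hnoadj b hb a ha ⟨hadj.2.1, hadj.1, (Ne.symm hadj.2.2.1), ?_⟩
      obtain ⟨w, hw1, hw2⟩ := hadj.2.2.2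
      exact ⟨w, hw1, by rwa [mul_comm]⟩
  -- primes dividing a common real class size lie on the same side
  have side : ∀ u : G, IsRealEl G u → ∀ r s : ℕ, r.Prime → s.Prime →
      r ∣ clSize G u → s ∣ clSize G u →
      ((r ∈ π₁ ∧ s ∈ π₂) ∨ (r ∈ π₂ ∧ s ∈ π₁)) → False := by
    intro u hu r s hr hs hrd hsd hcase
    have hrs : r ≠ s := by
      rintro rfl
      rcases hcase with ⟨h1, h2⟩ | ⟨h1, h2⟩
      · exact Set.disjoint_left.mp hdisj h1 h2
      · exact Set.disjoint_left.mp hdisj h2 h1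
    have hadj : realAdj G r s :=
      ⟨hr, hs, hrs, u, hu,
        Nat.Coprime.mul_dvd_of_dvd_of_dvd ((Nat.coprime_primes hr hs).mpr hrs) hrd hsd⟩
    exact hnoE r s hcase hadj
  have hvert : ∀ u : G, IsRealEl G u → ∀ r : ℕ, r.Prime → r ∣ clSize G u →
      r ∈ π₁ ∨ r ∈ π₂ := by
    intro u hu r hr hrd
    have : r ∈ realVerts G := ⟨hr, u, hu, hrd⟩
    rw [← huni] at this
    exact this
  have hside1 : ∀ r : ℕ, r.Prime → r ∣ clSize G x → r ∈ π₁ := by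
    intro r hr hrd
    rcases hvert x hxreal r hr hrd with h | h
    · exact h
    · exact absurd (side x hxreal p r hp hr hpa hrd (Or.inl ⟨hp1, h⟩)) not_false
  have hside2 : ∀ r : ℕ, r.Prime → r ∣ clSize G y → r ∈ π₂ := by
    intro r hr hrd
    rcases hvert y hyreal r hr hrd with h | h
    · exact absurd (side y hyreal q r hq hr hqb hrd (Or.inr ⟨hq2, h⟩)) not_false
    · exact h
  have hab_cop : Nat.Coprime (clSize G x) (clSize G y) := by
    by_contra hnc
    obtain ⟨r, hr, hr1, hr2⟩ := Nat.Prime.not_coprime_iff_dvd.mp hnc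
    exact Set.disjoint_left.mp hdisj (hside1 r hr hr1) (hside2 r hr hr2)
  -- finsets
  set a := clSize G x with ha
  set b := clSize G y with hb
  set Kx := (Finset.univ.filter (fun u : G => IsConj x u)) with hKx
  set Ky := (Finset.univ.filter (fun u : G => IsConj y u)) with hKy
  have hKxcard : Kx.card = a := (clSize_eq_card_filter x).symm
  have hKycard : Ky.card = b := (clSize_eq_card_filter y).symm
  have hKxmem : ∀ u ∈ Kx, IsConj x u := fun u hu => (Finset.mem_filter.mp hu).2
  have hKymem : ∀ u ∈ Ky, IsConj y u := fun u hu => (Finset.mem_filter.mp hu).2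
  have hxKx : x ∈ Kx := Finset.mem_filter.mpr ⟨Finset.mem_univ x, IsConj.refl x⟩
  have hyKy : y ∈ Ky := Finset.mem_filter.mpr ⟨Finset.mem_univ y, IsConj.refl y⟩
  have hinv_of_conj : ∀ w u : G, w * w = 1 → IsConj w u → u * u = 1 := by
    intro w u hw hc
    obtain ⟨c, hc'⟩ := isConj_iff.mp hc
    rw [← hc']
    calc (c * w * c⁻¹) * (c * w * c⁻¹) = c * (w * w) * c⁻¹ := by group
      _ = 1 := by rw [hw]; group
  have hKxinv : ∀ u ∈ Kx, u * u = 1 := fun u hu => hinv_of_conj x u hx2 (hKxmem u hu)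
  have hKyinv : ∀ u ∈ Ky, u * u = 1 := fun u hu => hinv_of_conj y u hy2 (hKymem u hu)
  have hKxcs : ∀ u ∈ Kx, clSize G u = a := fun u hu => (clSize_conj (hKxmem u hu)).symm
  have hKycs : ∀ u ∈ Ky, clSize G u = b := fun u hu => (clSize_conj (hKymem u hu)).symm
  have hKxcc : ∀ w ∈ Kx, ∀ g : G, g⁻¹ * w * g ∈ Kx := by
    intro w hw g
    refine Finset.mem_filter.mpr ⟨Finset.mem_univ _, (hKxmem w hw).trans ?_⟩
    exact isConj_iff.mpr ⟨g⁻¹, by group⟩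
  have hKycc : ∀ w ∈ Ky, ∀ g : G, g⁻¹ * w * g ∈ Ky := by
    intro w hw g
    refine Finset.mem_filter.mpr ⟨Finset.mem_univ _, (hKymem w hw).trans ?_⟩
    exact isConj_iff.mpr ⟨g⁻¹, by group⟩
  set T := @Finset.image _ _ (Classical.decEq G) (fun pr : G × G => pr.1 * pr.2) (Kx ×ˢ Ky) with hT
  have hTof : ∀ u ∈ Kx, ∀ v ∈ Ky, u * v ∈ T := by
    intro u hu v hv
    rw [hT]
    exact @Finset.mem_image_of_mem (G × G) G (Classical.decEq G) (Kx ×ˢ Ky)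
      (fun pr : G × G => pr.1 * pr.2) (u, v) (Finset.mem_product.mpr ⟨hu, hv⟩)
  have hTdec : ∀ z ∈ T, ∃ u ∈ Kx, ∃ v ∈ Ky, u * v = z := by
    intro z hz
    rw [hT] at hz
    obtain ⟨pr, hpr, he⟩ := Finset.mem_image.mp hz
    obtain ⟨h1, h2⟩ := Finset.mem_product.mp hpr
    exact ⟨pr.1, h1, pr.2, h2, he⟩
  have hTinv : ∀ z ∈ T, z * z = 1 := by
    intro z hz
    obtain ⟨u, hu, v, hv, rfl⟩ := hTdec z hz
    have hcomm := comm2 u v (hKxinv u hu) (hKyinv v hv)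
    calc (u * v) * (u * v) = u * (v * u) * v := by group
      _ = u * (u * v) * v := by rw [← hcomm]
      _ = (u * u) * (v * v) := by group
      _ = 1 := by rw [hKxinv u hu, hKyinv v hv, one_mul]
  have hTreal : ∀ z ∈ T, IsRealEl G z := fun z hz => isRealEl_of_sq (hTinv z hz)
  have hTcc : ∀ z ∈ T, ∀ g : G, g⁻¹ * z * g ∈ T := by
    intro z hz g
    obtain ⟨u, hu, v, hv, rfl⟩ := hTdec z hz
    have : g⁻¹ * (u * v) * g = (g⁻¹ * u * g) * (g⁻¹ * v * g) := by group
    rw [this]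
    exact hTof _ (hKxcc u hu g) _ (hKycc v hv g)
  -- dichotomy
  have hdich : ∀ z ∈ T, clSize G z = a ∨ clSize G z = b := by
    intro z hz
    obtain ⟨u, hu, v, hv, rfl⟩ := hTdec z hz
    have hcsu : clSize G u = a := hKxcs u hu
    have hcsv : clSize G v = b := hKycs v hv
    have hcopuv : Nat.Coprime (clSize G u) (clSize G v) := by
      rw [hcsu, hcsv]; exact hab_cop
    have hzreal : IsRealEl G (u * v) := hTreal _ hz
    by_cases hc1 : ∀ r : ℕ, r.Prime → r ∣ clSize G (u * v) → r ∈ π₁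
    · left
      have hcopzv : Nat.Coprime (clSize G (u * v)) (clSize G v) := by
        by_contra hnc
        obtain ⟨r, hr, hr1, hr2⟩ := Nat.Prime.not_coprime_iff_dvd.mp hnc
        rw [hcsv] at hr2
        exact Set.disjoint_left.mp hdisj (hc1 r hr hr1) (hside2 r hr hr2)
      rw [← hcsu]
      exact cs_eq_left rfl hcopuv hcopzv
    · right
      push_neg at hc1
      obtain ⟨r, hr, hrd, hrn1⟩ := hc1
      have hr2 : r ∈ π₂ := (hvert _ hzreal r hr hrd).resolve_left hrn1
      have hc2 : ∀ s : ℕ, s.Prime → s ∣ clSize G (u * v) → s ∈ π₂ := by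
        intro s hs hsd
        rcases hvert _ hzreal s hs hsd with h | h
        · exact absurd (side _ hzreal s r hs hr hsd hrd (Or.inl ⟨h, hr2⟩)) not_false
        · exact h
      have hcopzu : Nat.Coprime (clSize G (u * v)) (clSize G u) := by
        by_contra hnc
        obtain ⟨s, hs, hs1, hs2⟩ := Nat.Prime.not_coprime_iff_dvd.mp hnc
        rw [hcsu] at hs2
        exact Set.disjoint_left.mp hdisj (hside1 s hs hs2) (hc2 s hs hs1)
      rw [← hcsv]
      exact cs_eq_right rfl hcopuv hcopzu
  -- numerics
  have ha0 : a ≠ 0 := clSize_ne_zero x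
  have hb0 : b ≠ 0 := clSize_ne_zero y
  have ha2 : 2 ≤ a := le_trans hp.two_le (Nat.le_of_dvd (Nat.pos_of_ne_zero ha0) hpa)
  have hb2 : 2 ≤ b := le_trans hq.two_le (Nat.le_of_dvd (Nat.pos_of_ne_zero hb0) hqb)
  have hab_ne : a ≠ b := by
    intro h
    have hcop := hab_cop
    rw [h] at hcop
    have hb1 : b = 1 := by
      have := Nat.gcd_self b
      rw [Nat.Coprime] at hcop
      omega
    omega
  -- counting functions
  have hn_le : ∀ z : G, (Ky.filter (fun u => z * u ∈ Kx)).card ≤ b := by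
    intro z
    rw [← hKycard]
    exact Finset.card_filter_le _ _
  have hn'_le : ∀ z : G, (Kx.filter (fun u => z * u ∈ Ky)).card ≤ a := by
    intro z
    rw [← hKxcard]
    exact Finset.card_filter_le _ _
  have hn_pos : ∀ z ∈ T, 1 ≤ (Ky.filter (fun u => z * u ∈ Kx)).card := by
    intro z hz
    obtain ⟨u, hu, v, hv, rfl⟩ := hTdec z hz
    refine Finset.card_pos.mpr ⟨v, Finset.mem_filter.mpr ⟨hv, ?_⟩⟩
    rw [mul_assoc, hKyinv v hv, mul_one]
    exact hu
  have hbridge : ∀ z ∈ T, (Ky.filter (fun u => z * u ∈ Kx)).card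
      = (Kx.filter (fun u => z * u ∈ Ky)).card := by
    intro z hz
    have hzz := hTinv z hz
    apply Finset.card_bij (i := fun u _ => z * u)
    · intro u hu
      obtain ⟨h1, h2⟩ := Finset.mem_filter.mp hu
      refine Finset.mem_filter.mpr ⟨h2, ?_⟩
      rw [← mul_assoc, hzz, one_mul]
      exact h1
    · intro u _ u' _ he
      exact mul_left_cancel he
    · intro u hu
      obtain ⟨h1, h2⟩ := Finset.mem_filter.mp hu
      refine ⟨z * u, Finset.mem_filter.mpr ⟨h2, ?_⟩, ?_⟩
      · rw [← mul_assoc, hzz, one_mul]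
        exact h1
      · rw [← mul_assoc, hzz, one_mul]
  have hn_eq_b : ∀ z ∈ T, clSize G z = a → (Ky.filter (fun u => z * u ∈ Kx)).card = b := by
    intro z hz hcs
    have hdvd : b ∣ (Ky.filter (fun u => z * u ∈ Kx)).card := by
      have := key_dvd y z Kx hKxcc (by rw [hcs, ← hb]; exact hab_cop)
      exact this
    exact le_antisymm (hn_le z) (Nat.le_of_dvd (hn_pos z hz) hdvd)
  have hn'_eq_a : ∀ z ∈ T, clSize G z = b → (Kx.filter (fun u => z * u ∈ Ky)).card = a := by
    intro z hz hcs
    have hdvd : a ∣ (Kx.filter (fun u => z * u ∈ Ky)).card := by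
      have := key_dvd x z Ky hKycc (by rw [hcs, ← ha]; exact hab_cop.symm)
      exact this
    refine le_antisymm (hn'_le z) (Nat.le_of_dvd ?_ hdvd)
    rw [← hbridge z hz]
    exact hn_pos z hz
  -- total sum
  have hsum : ∑ z ∈ T, (Ky.filter (fun u => z * u ∈ Kx)).card = a * b := by
    have hfmem : ∀ pr : G × G, pr ∈ Kx ×ˢ Ky → pr.1 * pr.2 ∈ T := by
      intro pr hpr
      obtain ⟨h1, h2⟩ := Finset.mem_product.mp hpr
      exact hTof _ h1 _ h2
    have h0 := Finset.card_eq_sum_card_fiberwise hfmem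
    have h1 : ∀ z ∈ T, ((Kx ×ˢ Ky).filter (fun pr => pr.1 * pr.2 = z)).card
        = (Ky.filter (fun u => z * u ∈ Kx)).card := by
      intro z hz
      apply Finset.card_bij (i := fun pr _ => pr.2)
      · intro pr hpr
        obtain ⟨hmem, hprod⟩ := Finset.mem_filter.mp hpr
        obtain ⟨h1', h2'⟩ := Finset.mem_product.mp hmem
        refine Finset.mem_filter.mpr ⟨h2', ?_⟩
        have he : z * pr.2 = pr.1 := by
          rw [← hprod, mul_assoc, hKyinv pr.2 h2', mul_one]
        rw [he]
        exact h1'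
      · intro pr hpr pr' hpr' he
        obtain ⟨hmem, hprod⟩ := Finset.mem_filter.mp hpr
        obtain ⟨hmem', hprod'⟩ := Finset.mem_filter.mp hpr'
        have h2 : pr.1 * pr'.2 = pr'.1 * pr'.2 := by rw [← he, hprod, he, hprod']
        exact Prod.ext (mul_right_cancel h2) he
      · intro u hu
        obtain ⟨h1', h2'⟩ := Finset.mem_filter.mp hu
        refine ⟨(z * u, u), Finset.mem_filter.mpr
          ⟨Finset.mem_product.mpr ⟨h2', h1'⟩, ?_⟩, rfl⟩
        rw [mul_assoc, hKyinv u h1', mul_one]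
    rw [Finset.sum_congr rfl h1] at h0
    rw [← h0, Finset.card_product, hKxcard, hKycard]
  -- case analysis
  by_cases hallA : ∀ z ∈ T, clSize G z = a
  · -- every product class has size `a`
    have hfilt : ∀ z ∈ T, Ky.filter (fun u => z * u ∈ Kx) = Ky := by
      intro z hz
      apply Finset.eq_of_subset_of_card_le (Finset.filter_subset _ _)
      rw [hn_eq_b z hz (hallA z hz), hKycard]
    have hH : ∀ g ∈ Kx, ∀ u ∈ Ky, ∀ v ∈ Ky, g * (u * v) ∈ Kx := by
      intro g hg u hu v hv
      have hz : g * u ∈ T := hTof g hg u hu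
      have hv' : v ∈ Ky.filter (fun w => (g * u) * w ∈ Kx) := by
        rw [hfilt _ hz]
        exact hv
      have h2 := (Finset.mem_filter.mp hv').2
      rwa [mul_assoc] at h2
    refine endgame (K := Kx) (L := Ky) ?_ ?_ hKyinv ?_ hH
    · rw [hKxcard]
      exact hoddcs x hx2
    · rw [hKycard]
      exact hb2
    · exact fun u hu v hv => comm2 u v (hKyinv u hu) (hKyinv v hv)
  · push_neg at hallA
    obtain ⟨z₂, hz₂T, hz₂a⟩ := hallA
    have hz₂b : clSize G z₂ = b := (hdich z₂ hz₂T).resolve_left hz₂a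
    have hallB : ∀ z ∈ T, clSize G z = b := by
      intro z hz
      rcases hdich z hz with h | h
      · exfalso
        have hT₁card : a ≤ (T.filter (fun z' => clSize G z' = a)).card := by
          have hsub : Finset.univ.filter (fun w => IsConj z w)
              ⊆ T.filter (fun z' => clSize G z' = a) := by
            intro w hw
            have hcw : IsConj z w := (Finset.mem_filter.mp hw).2
            refine Finset.mem_filter.mpr ⟨?_, ?_⟩
            · obtain ⟨c, hc⟩ := isConj_iff.mp hcw
              have he : (c⁻¹)⁻¹ * z * c⁻¹ = w := by simpa using hc
              rw [← he]
              exact hTcc z hz c⁻¹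
            · rw [← clSize_conj hcw]
              exact h
          calc a = clSize G z := h.symm
            _ = (Finset.univ.filter (fun w => IsConj z w)).card := clSize_eq_card_filter z
            _ ≤ (T.filter (fun z' => clSize G z' = a)).card := Finset.card_le_card hsub
        have hT₂card : b ≤ (T.filter (fun z' => ¬ clSize G z' = a)).card := by
          have hsub : Finset.univ.filter (fun w => IsConj z₂ w)
              ⊆ T.filter (fun z' => ¬ clSize G z' = a) := by
            intro w hw
            have hcw : IsConj z₂ w := (Finset.mem_filter.mp hw).2
            refine Finset.mem_filter.mpr ⟨?_, ?_⟩
            · obtain ⟨c, hc⟩ := isConj_iff.mp hcw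
              have he : (c⁻¹)⁻¹ * z₂ * c⁻¹ = w := by simpa using hc
              rw [← he]
              exact hTcc z₂ hz₂T c⁻¹
            · rw [← clSize_conj hcw, hz₂b]
              intro hh
              exact hab_ne hh.symm
          calc b = clSize G z₂ := hz₂b.symm
            _ = (Finset.univ.filter (fun w => IsConj z₂ w)).card := clSize_eq_card_filter z₂
            _ ≤ (T.filter (fun z' => ¬ clSize G z' = a)).card := Finset.card_le_card hsub
        have hsplit := Finset.sum_filter_add_sum_filter_not T (fun z' => clSize G z' = a)
            (fun z' => (Ky.filter (fun u => z' * u ∈ Kx)).card)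
        have e1 : ∑ z' ∈ T.filter (fun z' => clSize G z' = a),
            (Ky.filter (fun u => z' * u ∈ Kx)).card
            = (T.filter (fun z' => clSize G z' = a)).card * b := by
          rw [Finset.sum_congr rfl (fun z' hz' => hn_eq_b z' (Finset.mem_filter.mp hz').1
            (Finset.mem_filter.mp hz').2), Finset.sum_const, smul_eq_mul]
        have e2 : ∑ z' ∈ T.filter (fun z' => ¬ clSize G z' = a),
            (Ky.filter (fun u => z' * u ∈ Kx)).card
            = (T.filter (fun z' => ¬ clSize G z' = a)).card * a := by
          have hterm : ∀ z' ∈ T.filter (fun z' => ¬ clSize G z' = a),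
              (Ky.filter (fun u => z' * u ∈ Kx)).card = a := by
            intro z' hz'
            obtain ⟨hzT', hza'⟩ := Finset.mem_filter.mp hz'
            have hzb' : clSize G z' = b := (hdich z' hzT').resolve_left hza'
            rw [hbridge z' hzT']
            exact hn'_eq_a z' hzT' hzb'
          rw [Finset.sum_congr rfl hterm, Finset.sum_const, smul_eq_mul]
        have ecomb : (T.filter (fun z' => clSize G z' = a)).card * b
            + (T.filter (fun z' => ¬ clSize G z' = a)).card * a = a * b := by
          rw [← e1, ← e2, hsplit]
          exact hsum
        have hlt : a * b < (T.filter (fun z' => clSize G z' = a)).card * b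
            + (T.filter (fun z' => ¬ clSize G z' = a)).card * a := by
          have g1 : a * b ≤ (T.filter (fun z' => clSize G z' = a)).card * b :=
            Nat.mul_le_mul hT₁card (le_refl b)
          have g2 : 0 < (T.filter (fun z' => ¬ clSize G z' = a)).card * a :=
            Nat.mul_pos (lt_of_lt_of_le (by omega) hT₂card) (by omega)
          calc a * b < a * b + (T.filter (fun z' => ¬ clSize G z' = a)).card * a :=
                Nat.lt_add_of_pos_right g2
            _ ≤ (T.filter (fun z' => clSize G z' = a)).card * b
                + (T.filter (fun z' => ¬ clSize G z' = a)).card * a :=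
                Nat.add_le_add_right g1 _
        exact hlt.ne' ecomb
      · exact h
    have hfilt' : ∀ z ∈ T, Kx.filter (fun u => z * u ∈ Ky) = Kx := by
      intro z hz
      apply Finset.eq_of_subset_of_card_le (Finset.filter_subset _ _)
      rw [hn'_eq_a z hz (hallB z hz), hKxcard]
    have hH' : ∀ g ∈ Ky, ∀ u ∈ Kx, ∀ v ∈ Kx, g * (u * v) ∈ Ky := by
      intro g hg u hu v hv
      have hz : u * g ∈ T := hTof u hu g hg
      have hv' : v ∈ Kx.filter (fun w => (u * g) * w ∈ Ky) := by
        rw [hfilt' _ hz]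
        exact hv
      have h2 := (Finset.mem_filter.mp hv').2
      have hcomm : g * u = u * g := comm2 g u (hKyinv g hg) (hKxinv u hu)
      rw [← mul_assoc, hcomm]
      exact h2
    refine endgame (K := Ky) (L := Kx) ?_ ?_ hKxinv ?_ hH'
    · rw [hKycard]
      exact hoddcs y hy2
    · rw [hKxcard]
      exact ha2
    · exact fun u hu v hv => comm2 u v (hKxinv u hu) (hKxinv v hv)
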